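/- LP^MLN programs 𝔽 and 𝔾 over 𝒫 are structurally equivalent if and only if for every interpretation X, the reducts (𝔽̄_X)^X and (𝔾̄_X)^X are classically equivalent, i.e., satisfied by exactly the same interpretations. -/

import Mathlib

namespace LPMLN

/-- Propositional formulas over a set of atoms `P`, built from atoms and `⊥`
using `∧`, `∨`, `→`. -/
inductive Formula (P : Type) : Type where
  | atom : P → Formula P
  | bot  : Formula P
  | and  : Formula P → Formula P → Formula P
  | or   : Formula P → Formula P → Formula P
  | imp  : Formula P → Formula P → Formula P
deriving DecidableEq

variable {P : Type} [DecidableEq P]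

/-- `¬F` abbreviates `F → ⊥`. -/
def Formula.neg (F : Formula P) : Formula P := .imp F .bot

/-- Classical evaluation of a formula in an interpretation `X ⊆ P`. -/
def Formula.eval (X : Finset P) : Formula P → Bool
  | .atom p => decide (p ∈ X)
  | .bot => false
  | .and F G => F.eval X && G.eval X
  | .or F G => F.eval X || G.eval X
  | .imp F G => !(F.eval X) || G.eval X

/-- Classical satisfaction `X ⊨ F`. -/
def Formula.sat (X : Finset P) (F : Formula P) : Prop := F.eval X = true

/-- The reduct `F^X`: every maximal subformula not satisfied by `X` is replaced by `⊥`. -/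
def Formula.reduct (X : Finset P) : Formula P → Formula P
  | .atom p => if p ∈ X then .atom p else .bot
  | .bot => .bot
  | .and F G => if (Formula.and F G).eval X then .and (F.reduct X) (G.reduct X) else .bot
  | .or F G => if (Formula.or F G).eval X then .or (F.reduct X) (G.reduct X) else .bot
  | .imp F G => if (Formula.imp F G).eval X then .imp (F.reduct X) (G.reduct X) else .bot

/-- `X` satisfies a (finite) set of formulas. -/
def satSet (X : Finset P) (Γ : Finset (Formula P)) : Prop := ∀ F ∈ Γ, F.sat X

/-- The reduct `Γ^X` of a finite set of formulas. -/
def reductSet (X : Finset P) (Γ : Finset (Formula P)) : Finset (Formula P) :=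
  Γ.image (Formula.reduct X)

/-- `X` is a stable model of `Γ` if `X ⊨ Γ^X` and no proper subset of `X` satisfies `Γ^X`. -/
def StableModel (Γ : Finset (Formula P)) (X : Finset P) : Prop :=
  satSet X (reductSet X Γ) ∧ ∀ Y, Y ⊂ X → ¬ satSet Y (reductSet X Γ)

/-- A weight is a real number (soft) or the symbol `α` (hard). -/
inductive Weight : Type where
  | soft : ℝ → Weight
  | hard : Weight

noncomputable instance : DecidableEq Weight := Classical.decEq _

/-- An LP^MLN program: a finite set of weighted formulas `w : R`. -/
abbrev Program (P : Type) [DecidableEq P] := Finset (Weight × Formula P)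

/-- `𝔽_X`: the weighted formulas of `𝔽` whose formula is satisfied by `X`. -/
noncomputable def progSat (𝔽 : Program P) (X : Finset P) : Program P :=
  𝔽.filter (fun r => r.2.eval X = true)

/-- `𝔽̄`: the formulas of `𝔽`, with weights dropped. -/
noncomputable def formulas (𝔽 : Program P) : Finset (Formula P) := 𝔽.image Prod.snd

/-- `X` is a soft stable model of `𝔽` (i.e. `X ∈ SM[𝔽]`) if `X` is a stable model of `𝔽̄_X`. -/
def SoftStable (𝔽 : Program P) (X : Finset P) : Prop :=
  StableModel (formulas (progSat 𝔽 X)) X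

/-- w-expressions: either zero or a formal expression `e^{c₁ + c₂·α}` with `c₁ : ℝ`, `c₂ : ℤ`. -/
inductive WExpr : Type where
  | zero : WExpr
  | exp : ℝ → ℤ → WExpr

/-- Multiplication of w-expressions: add exponents componentwise; zero is absorbing. -/
def WExpr.mul : WExpr → WExpr → WExpr
  | .zero, _ => .zero
  | _, .zero => .zero
  | .exp a b, .exp c d => .exp (a + c) (b + d)

/-- Inverse of a w-expression: negate both exponents. -/
def WExpr.inv : WExpr → WExpr
  | .zero => .zero
  | .exp a b => .exp (-a) (-b)

/-- Evaluation of a w-expression at a real number `a`. -/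
noncomputable def WExpr.eval (a : ℝ) : WExpr → ℝ
  | .zero => 0
  | .exp c₁ c₂ => Real.exp (c₁ + c₂ * a)

/-- The real contribution of a weight (hard rules contribute `0` to the soft sum). -/
def softWeight : Weight → ℝ
  | .soft r => r
  | .hard => 0

/-- Sum of the weights of the soft rules of `𝔽`. -/
noncomputable def softSum (𝔽 : Program P) : ℝ := ∑ r ∈ 𝔽, softWeight r.1

/-- The number of hard rules of `𝔽`. -/
noncomputable def hardCount (𝔽 : Program P) : ℤ :=
  ((𝔽.filter (fun r => r.1 = Weight.hard)).card : ℤ)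

/-- `TW(𝔽) = e^{c₁ + c₂·α}` where `c₁` is the sum of the soft weights and
`c₂` the number of hard rules. -/
noncomputable def TW (𝔽 : Program P) : WExpr := .exp (softSum 𝔽) (hardCount 𝔽)

open Classical in
/-- `W_𝔽(X) = TW(𝔽_X)` if `X ∈ SM[𝔽]`, and zero otherwise. -/
noncomputable def W (𝔽 : Program P) (X : Finset P) : WExpr :=
  if SoftStable 𝔽 X then TW (progSat 𝔽 X) else .zero

open Classical in
/-- `W^pnt_𝔽(X) = TW(𝔽 \ 𝔽_X)⁻¹` if `X ∈ SM[𝔽]`, and zero otherwise. -/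
noncomputable def Wpnt (𝔽 : Program P) (X : Finset P) : WExpr :=
  if SoftStable 𝔽 X then (TW (𝔽 \ progSat 𝔽 X)).inv else .zero

/-- `P_𝔽(X)`: the limit as `a → ∞` of the normalized evaluation of `W_𝔽(X)`. -/
noncomputable def Pr [Fintype P] (𝔽 : Program P) (X : Finset P) : ℝ :=
  Filter.limUnder Filter.atTop
    (fun a : ℝ => (W 𝔽 X).eval a / ∑ Y : Finset P, (W 𝔽 Y).eval a)

/-- `P^pnt_𝔽(X)`: the limit as `a → ∞` of the normalized evaluation of `W^pnt_𝔽(X)`. -/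
noncomputable def PrPnt [Fintype P] (𝔽 : Program P) (X : Finset P) : ℝ :=
  Filter.limUnder Filter.atTop
    (fun a : ℝ => (Wpnt 𝔽 X).eval a / ∑ Y : Finset P, (Wpnt 𝔽 Y).eval a)

/-- Weak equivalence: the same probability distribution. -/
def WeakEquiv [Fintype P] (𝔽 𝔾 : Program P) : Prop :=
  ∀ X : Finset P, Pr 𝔽 X = Pr 𝔾 X

/-- Strong equivalence of LP^MLN programs. -/
def StrongEquiv [Fintype P] (𝔽 𝔾 : Program P) : Prop :=
  ∀ (ℍ : Program P) (X : Finset P), Pr (𝔽 ∪ ℍ) X = Pr (𝔾 ∪ ℍ) X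

/-- Structural equivalence of LP^MLN programs. -/
def StructEquiv (𝔽 𝔾 : Program P) : Prop :=
  ∀ (ℍ : Program P) (X : Finset P), SoftStable (𝔽 ∪ ℍ) X ↔ SoftStable (𝔾 ∪ ℍ) X

/-- HT satisfaction `⟨Y,X⟩ ⊨ₕₜ F` (at the world "here"). -/
def htSat (Y X : Finset P) : Formula P → Prop
  | .atom p => p ∈ Y
  | .bot => False
  | .and F G => htSat Y X F ∧ htSat Y X G
  | .or F G => htSat Y X F ∨ htSat Y X G
  | .imp F G => (htSat Y X F → htSat Y X G) ∧ (Formula.imp F G).sat X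

/-- `⟨Y,X⟩` is an HT model of a set `Γ` of formulas. -/
def HTModel (Γ : Finset (Formula P)) (Y X : Finset P) : Prop :=
  Y ⊆ X ∧ ∀ F ∈ Γ, htSat Y X F

/-- `⟨Y,X⟩` is a soft HT model of an LP^MLN program `𝔽`. -/
def SoftHT (𝔽 : Program P) (Y X : Finset P) : Prop :=
  Y ⊆ X ∧ ∀ r ∈ progSat 𝔽 X, htSat Y X r.2

/-- The choice formula `{F}^ch = F ∨ ¬F`. -/
def Formula.ch (F : Formula P) : Formula P := .or F F.neg

/-- `{Γ}^ch`, choice formulas of a set of formulas. -/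
def chSet (Γ : Finset (Formula P)) : Finset (Formula P) := Γ.image Formula.ch

/-- Renaming of atoms. -/
def Formula.rename {Q : Type} (f : P → Q) : Formula P → Formula Q
  | .atom p => .atom (f p)
  | .bot => .bot
  | .and F G => .and (F.rename f) (G.rename f)
  | .or F G => .or (F.rename f) (G.rename f)
  | .imp F G => .imp (F.rename f) (G.rename f)

/-- `Δ_{𝒫'}(F)`, a formula over `𝒫 ∪ 𝒫'`; unprimed atoms are `Sum.inl p`,
primed atoms `p'` are `Sum.inr p`. -/
def Formula.delta : Formula P → Formula (P ⊕ P)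
  | .atom p => .atom (Sum.inr p)
  | .bot => .bot
  | .and F G => .and F.delta G.delta
  | .or F G => .or F.delta G.delta
  | .imp F G => .and (.imp F.delta G.delta)
      (.imp (F.rename Sum.inl) (G.rename Sum.inl))

/-- `Δ_{𝒫'}(Γ)` for a set of formulas. -/
def deltaSet (Γ : Finset (Formula P)) : Finset (Formula (P ⊕ P)) :=
  Γ.image Formula.delta

/-- The interpretation `Y' ∪ X` of `𝒫 ∪ 𝒫'`. -/
def primedInterp (Y X : Finset P) : Finset (P ⊕ P) :=
  X.image Sum.inl ∪ Y.image Sum.inr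


lemma eval_reduct_self (X : Finset P) (F : Formula P) :
    (F.reduct X).eval X = F.eval X := by
  induction F with
  | atom p => by_cases h : p ∈ X <;> simp [Formula.reduct, Formula.eval, h]
  | bot => rfl
  | and F G ihF ihG =>
      simp only [Formula.reduct]
      split_ifs with h
      · simp [Formula.eval, ihF, ihG]
      · exact ((Bool.not_eq_true _).mp h).symm
  | or F G ihF ihG =>
      simp only [Formula.reduct]
      split_ifs with h
      · simp [Formula.eval, ihF, ihG]
      · exact ((Bool.not_eq_true _).mp h).symm
  | imp F G ihF ihG =>
      simp only [Formula.reduct]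
      split_ifs with h
      · simp [Formula.eval, ihF, ihG]
      · exact ((Bool.not_eq_true _).mp h).symm

lemma eval_reduct_inter (X Y : Finset P) (F : Formula P) :
    (F.reduct X).eval Y = (F.reduct X).eval (Y ∩ X) := by
  induction F with
  | atom p =>
      by_cases h : p ∈ X <;> simp [Formula.reduct, Formula.eval, h, Finset.mem_inter]
  | bot => rfl
  | and F G ihF ihG =>
      simp only [Formula.reduct]
      split_ifs with h
      · simp [Formula.eval, ihF, ihG]
      · rfl
  | or F G ihF ihG =>
      simp only [Formula.reduct]
      split_ifs with h
      · simp [Formula.eval, ihF, ihG]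
      · rfl
  | imp F G ihF ihG =>
      simp only [Formula.reduct]
      split_ifs with h
      · simp [Formula.eval, ihF, ihG]
      · rfl

lemma satSet_union (Y : Finset P) (A B : Finset (Formula P)) :
    satSet Y (A ∪ B) ↔ satSet Y A ∧ satSet Y B := by
  simp [satSet, Finset.mem_union, or_imp, forall_and]

lemma satSet_reductSet (X Y : Finset P) (Γ : Finset (Formula P)) :
    satSet Y (reductSet X Γ) ↔ ∀ G ∈ Γ, (G.reduct X).sat Y := by
  unfold satSet reductSet
  exact Finset.forall_mem_image

lemma satSet_reductSet_inter (X Y : Finset P) (Γ : Finset (Formula P)) :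
    satSet Y (reductSet X Γ) ↔ satSet (Y ∩ X) (reductSet X Γ) := by
  rw [satSet_reductSet, satSet_reductSet]
  constructor <;> intro h G hG
  · have hh := h G hG
    rw [Formula.sat, eval_reduct_inter] at hh
    exact hh
  · have hh := h G hG
    rw [Formula.sat, ← eval_reduct_inter] at hh
    exact hh

lemma satSet_reduct_self (𝔽 : Program P) (X : Finset P) :
    satSet X (reductSet X (formulas (progSat 𝔽 X))) := by
  rw [satSet_reductSet]
  intro G hG
  simp only [formulas, progSat, Finset.mem_image, Finset.mem_filter] at hG
  obtain ⟨r, ⟨_, hev⟩, rfl⟩ := hG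
  rw [Formula.sat, eval_reduct_self]
  exact hev

lemma softStable_union_iff (𝔽 ℍ : Program P) (X : Finset P) :
    SoftStable (𝔽 ∪ ℍ) X ↔
      (satSet X (reductSet X (formulas (progSat 𝔽 X))) ∧
        satSet X (reductSet X (formulas (progSat ℍ X)))) ∧
      ∀ Z, Z ⊂ X →
        ¬ (satSet Z (reductSet X (formulas (progSat 𝔽 X))) ∧
           satSet Z (reductSet X (formulas (progSat ℍ X)))) := by
  unfold SoftStable StableModel
  rw [show progSat (𝔽 ∪ ℍ) X = progSat 𝔽 X ∪ progSat ℍ X from Finset.filter_union _ _ _,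
    show formulas (progSat 𝔽 X ∪ progSat ℍ X)
        = formulas (progSat 𝔽 X) ∪ formulas (progSat ℍ X) from Finset.image_union _ _,
    show reductSet X (formulas (progSat 𝔽 X) ∪ formulas (progSat ℍ X))
        = reductSet X (formulas (progSat 𝔽 X)) ∪ reductSet X (formulas (progSat ℍ X))
      from Finset.image_union _ _]
  simp only [satSet_union]

lemma key (𝔽 𝔾 : Program P) (h : StructEquiv 𝔽 𝔾) (X Y : Finset P) (hYX : Y ⊆ X)
    (hA : satSet Y (reductSet X (formulas (progSat 𝔽 X)))) :
    satSet Y (reductSet X (formulas (progSat 𝔾 X))) := by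
  classical
  by_contra hB
  have hYne : Y ≠ X := by
    intro he; subst he; exact hB (satSet_reduct_self 𝔾 Y)
  have hYss : Y ⊂ X := hYX.ssubset_of_ne hYne
  set ℍ : Program P :=
    (Y.image fun p => (Weight.hard, Formula.atom p)) ∪
    ((X \ Y) ×ˢ (X \ Y)).image
      (fun pq => (Weight.hard, Formula.imp (.atom pq.1) (.atom pq.2))) with hHdef
  have memH : ∀ r : Weight × Formula P, r ∈ ℍ ↔
      (∃ p ∈ Y, r = (Weight.hard, Formula.atom p)) ∨
      (∃ p ∈ X \ Y, ∃ q ∈ X \ Y,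
        r = (Weight.hard, Formula.imp (.atom p) (.atom q))) := by
    intro r
    simp only [hHdef, Finset.mem_union, Finset.mem_image, Finset.mem_product]
    constructor
    · rintro (⟨p, hp, rfl⟩ | ⟨⟨p, q⟩, ⟨hp, hq⟩, rfl⟩)
      · exact Or.inl ⟨p, hp, rfl⟩
      · exact Or.inr ⟨p, hp, q, hq, rfl⟩
    · rintro (⟨p, hp, rfl⟩ | ⟨p, hp, q, hq, rfl⟩)
      · exact Or.inl ⟨p, hp, rfl⟩
      · exact Or.inr ⟨⟨p, q⟩, ⟨hp, hq⟩, rfl⟩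
  have hps : progSat ℍ X = ℍ := by
    apply Finset.filter_true_of_mem
    intro r hr
    rcases (memH r).mp hr with ⟨p, hp, rfl⟩ | ⟨p, hp, q, hq, rfl⟩
    · simp [Formula.eval, hYX hp]
    · simp [Formula.eval, (Finset.mem_sdiff.mp hq).1]
  have hHsat : ∀ Z : Finset P, satSet Z (reductSet X (formulas ℍ)) ↔
      (Y ⊆ Z ∧ ∀ p ∈ X \ Y, ∀ q ∈ X \ Y, p ∈ Z → q ∈ Z) := by
    intro Z
    rw [satSet_reductSet]
    unfold formulas
    rw [Finset.forall_mem_image]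
    constructor
    · intro hall
      constructor
      · intro p hp
        have := hall (x := (Weight.hard, Formula.atom p))
          ((memH _).mpr (Or.inl ⟨p, hp, rfl⟩))
        simpa [Formula.reduct, hYX hp, Formula.sat, Formula.eval] using this
      · intro p hp q hq hpZ
        have := hall (x := (Weight.hard, Formula.imp (.atom p) (.atom q)))
          ((memH _).mpr (Or.inr ⟨p, hp, q, hq, rfl⟩))
        simp [Formula.reduct, Formula.sat, Formula.eval, (Finset.mem_sdiff.mp hp).1,
          (Finset.mem_sdiff.mp hq).1] at this
        tauto
    · rintro ⟨hYZ, hcl⟩ r hr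
      rcases (memH r).mp hr with ⟨p, hp, rfl⟩ | ⟨p, hp, q, hq, rfl⟩
      · simp [Formula.reduct, hYX hp, Formula.sat, Formula.eval, hYZ hp]
      · have := hcl p hp q hq
        simp [Formula.reduct, Formula.sat, Formula.eval, (Finset.mem_sdiff.mp hp).1,
          (Finset.mem_sdiff.mp hq).1]
        tauto
  have hGstable : SoftStable (𝔾 ∪ ℍ) X := by
    rw [softStable_union_iff]
    refine ⟨⟨satSet_reduct_self 𝔾 X, ?_⟩, ?_⟩
    · rw [hps, hHsat]
      exact ⟨hYX, fun p hp q hq _ => (Finset.mem_sdiff.mp hq).1⟩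
    · rintro Z hZ ⟨hZB, hZH⟩
      rw [hps, hHsat] at hZH
      obtain ⟨hYZ, hcl⟩ := hZH
      by_cases hex : ∃ p ∈ X \ Y, p ∈ Z
      · obtain ⟨p, hp, hpZ⟩ := hex
        have hXZ : X ⊆ Z := by
          intro q hq
          by_cases hqY : q ∈ Y
          · exact hYZ hqY
          · exact hcl p hp q (Finset.mem_sdiff.mpr ⟨hq, hqY⟩) hpZ
        exact (Finset.ssubset_iff_subset_ne.mp hZ).2
            (Finset.Subset.antisymm hZ.subset hXZ)
      · push_neg at hex
        have hZY : Z ⊆ Y := by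
          intro z hz
          by_cases hzY : z ∈ Y
          · exact hzY
          · exact absurd hz (hex z (Finset.mem_sdiff.mpr ⟨hZ.subset hz, hzY⟩))
        have : Z = Y := Finset.Subset.antisymm hZY hYZ
        rw [this] at hZB
        exact hB hZB
  have hFnotstable : ¬ SoftStable (𝔽 ∪ ℍ) X := by
    rw [softStable_union_iff]
    rintro ⟨-, hmin⟩
    apply hmin Y hYss
    refine ⟨hA, ?_⟩
    rw [hps, hHsat]
    exact ⟨Finset.Subset.refl Y,
      fun p hp q hq hpY => absurd hpY (Finset.mem_sdiff.mp hp).2⟩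
  exact hFnotstable ((h ℍ X).mpr hGstable)

/-- structural equivalence iff for every `X` the reducts `(𝔽̄_X)^X` and
`(𝔾̄_X)^X` are classically equivalent. -/
theorem stmt9 {P : Type} [DecidableEq P] (𝔽 𝔾 : Program P) :
    StructEquiv 𝔽 𝔾 ↔
      ∀ X Y : Finset P,
        satSet Y (reductSet X (formulas (progSat 𝔽 X))) ↔
        satSet Y (reductSet X (formulas (progSat 𝔾 X))) := by
  constructor
  · intro h X Y
    constructor
    · intro hA
      rw [satSet_reductSet_inter] at hA ⊢
      exact key 𝔽 𝔾 h X (Y ∩ X) Finset.inter_subset_right hA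
    · intro hB
      rw [satSet_reductSet_inter] at hB ⊢
      exact key 𝔾 𝔽 (fun ℍ Z => (h ℍ Z).symm) X (Y ∩ X) Finset.inter_subset_right hB
  · intro h ℍ X
    rw [softStable_union_iff, softStable_union_iff]
    constructor
    · rintro ⟨⟨h1, h2⟩, h3⟩
      exact ⟨⟨(h X X).mp h1, h2⟩, fun Z hZ hc => h3 Z hZ ⟨(h X Z).mpr hc.1, hc.2⟩⟩
    · rintro ⟨⟨h1, h2⟩, h3⟩
      exact ⟨⟨(h X X).mpr h1, h2⟩, fun Z hZ hc => h3 Z hZ ⟨(h X Z).mp hc.1, hc.2⟩⟩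

end LPMLN
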